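/- For every n ≥ 0, the Hopf map p : S^{2n+1} → ℂPⁿ, which sends a unit vector v in ℂ^{n+1} to the complex line through v, is a locally trivial fiber bundle with fiber the circle group: every point of ℂPⁿ has an open neighborhood U together with a homeomorphism p⁻¹(U) ≅ U × S¹ commuting with the projections to U. -/

import Mathlib

/-- Complex projective `n`-space: the projectivization of `ℂ^{n+1}`. -/
noncomputable def CP (n : ℕ) : Type :=
  Projectivization ℂ (EuclideanSpace ℂ (Fin (n + 1)))

/-- The quotient topology on `ℂPⁿ`, coming from the topology on `ℂ^{n+1} \ {0}`. -/
noncomputable instance (n : ℕ) : TopologicalSpace (CP n) :=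
  inferInstanceAs (TopologicalSpace
    (Quotient (projectivizationSetoid ℂ (EuclideanSpace ℂ (Fin (n + 1))))))

/-- The odd-dimensional sphere `S^{2n+1}`: the unit sphere in `ℂ^{n+1}`. -/
noncomputable def oddSphere (n : ℕ) : Type :=
  Metric.sphere (0 : EuclideanSpace ℂ (Fin (n + 1))) 1

noncomputable instance (n : ℕ) : TopologicalSpace (oddSphere n) :=
  inferInstanceAs (TopologicalSpace (Metric.sphere (0 : EuclideanSpace ℂ (Fin (n + 1))) 1))

/-- The Hopf map `S^{2n+1} → ℂPⁿ`, sending a unit vector `v` of `ℂ^{n+1}` to the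
complex line through `v`; it is the restriction to the unit sphere of the canonical
projection `ℂ^{n+1} \ {0} → ℂPⁿ`. -/
noncomputable def hopfMap (n : ℕ) : oddSphere n → CP n := fun v =>
  let v' : Metric.sphere (0 : EuclideanSpace ℂ (Fin (n + 1))) 1 := v
  Projectivization.mk ℂ (v' : EuclideanSpace ℂ (Fin (n + 1)))
    (by
      intro h
      have hv := mem_sphere_zero_iff_norm.mp v'.2
      rw [h] at hv
      simp at hv)

/-! ### Auxiliary material for the proof -/

open scoped ComplexInnerProductSpace

namespace HopfAux

noncomputable section

variable {n : ℕ}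

abbrev Ee (n : ℕ) := EuclideanSpace ℂ (Fin (n + 1))

/-- The underlying vector of a point of the sphere. -/
def sval {n : ℕ} (v : oddSphere n) : Ee n := Subtype.val v

/-- The scalar used in the local section. -/
def sc (v₀ w : Ee n) : ℂ :=
  (((‖(⟪v₀, w⟫ : ℂ)‖ : ℝ) : ℂ) / (⟪v₀, w⟫ : ℂ)) * (((‖w‖ : ℝ) : ℂ))⁻¹

/-- Local section: normalized representative. -/
def S (v₀ w : Ee n) : Ee n := sc v₀ w • w

lemma sc_ne_zero (v₀ w : Ee n) (hw : w ≠ 0) (hc : (⟪v₀, w⟫ : ℂ) ≠ 0) : sc v₀ w ≠ 0 := by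
  unfold sc
  have h2 : ((‖(⟪v₀, w⟫ : ℂ)‖ : ℝ) : ℂ) ≠ 0 := by simpa using hc
  have h3 : ((‖w‖ : ℝ) : ℂ) ≠ 0 := by simpa using hw
  exact mul_ne_zero (div_ne_zero h2 hc) (inv_ne_zero h3)

lemma S_smul (v₀ w : Ee n) (a : ℂ) (ha : a ≠ 0) : S v₀ (a • w) = S v₀ w := by
  by_cases hc : (⟪v₀, w⟫ : ℂ) = 0
  · simp [S, sc, hc, inner_smul_right]
  · unfold S sc
    rw [inner_smul_right, smul_smul]
    congr 1
    have hna : ((‖a • w‖ : ℝ) : ℂ) = (‖a‖ : ℂ) * (‖w‖ : ℂ) := by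
      rw [norm_smul]; push_cast; ring
    have h1 : ((‖a * ⟪v₀, w⟫‖ : ℝ) : ℂ) = (‖a‖ : ℂ) * (‖⟪v₀, w⟫‖ : ℂ) := by
      rw [norm_mul]; push_cast; ring
    rw [hna, h1]
    have hnw : w ≠ 0 := fun h => hc (by simp [h])
    have h2 : (‖a‖ : ℂ) ≠ 0 := by simpa using ha
    have h3 : (‖w‖ : ℂ) ≠ 0 := by simpa using hnw
    set c : ℂ := (⟪v₀, w⟫ : ℂ) with hcdef
    set r : ℂ := (‖a‖ : ℂ)
    set t : ℂ := (‖w‖ : ℂ)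
    set m : ℂ := (‖c‖ : ℂ)
    field_simp

lemma norm_S (v₀ w : Ee n) (hw : w ≠ 0) (hc : (⟪v₀, w⟫ : ℂ) ≠ 0) : ‖S v₀ w‖ = 1 := by
  unfold S sc
  rw [norm_smul]
  have hcn : ‖(⟪v₀, w⟫ : ℂ)‖ ≠ 0 := norm_ne_zero_iff.mpr hc
  have hwn : ‖w‖ ≠ 0 := norm_ne_zero_iff.mpr hw
  rw [norm_mul, norm_div, norm_inv]
  simp only [Complex.norm_real, Real.norm_eq_abs, abs_norm]
  set m : ℝ := ‖(⟪v₀, w⟫ : ℂ)‖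
  field_simp

lemma inner_S (v₀ w : Ee n) (hc : (⟪v₀, w⟫ : ℂ) ≠ 0) :
    (⟪v₀, S v₀ w⟫ : ℂ) = ((‖(⟪v₀, w⟫ : ℂ)‖ * ‖w‖⁻¹ : ℝ) : ℂ) := by
  unfold S sc
  rw [inner_smul_right]
  set c : ℂ := (⟪v₀, w⟫ : ℂ) with hcdef
  push_cast
  rw [div_mul_eq_mul_div, div_mul_eq_mul_div, mul_comm _ c]
  exact mul_div_cancel_left₀ _ hc

/-- Invariant "distance-to-hyperplane" function on projective space. -/
def normc (v₀ : Ee n) : CP n → ℝ :=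
  Quotient.lift (fun w : { v : Ee n // v ≠ 0 } => ‖(⟪v₀, w.1⟫ : ℂ)‖ / ‖w.1‖)
    (by
      rintro a b hab
      obtain ⟨u, hu⟩ := hab
      have hu' : (u : ℂ) • (b : Ee n) = (a : Ee n) := hu
      rw [← hu', inner_smul_right, norm_smul, norm_mul]
      have hbn : ‖(b : Ee n)‖ ≠ 0 := norm_ne_zero_iff.mpr b.2
      have hun : ‖(u : ℂ)‖ ≠ 0 := norm_ne_zero_iff.mpr u.ne_zero
      field_simp)

/-- The local section on projective space. -/
def sectCP (v₀ : Ee n) : CP n → Ee n :=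
  Quotient.lift (fun w : { v : Ee n // v ≠ 0 } => S v₀ w.1)
    (by
      rintro a b hab
      obtain ⟨u, hu⟩ := hab
      have hu' : (u : ℂ) • (b : Ee n) = (a : Ee n) := hu
      rw [← hu', S_smul v₀ _ _ u.ne_zero])

lemma normc_mk (v₀ : Ee n) (w : { v : Ee n // v ≠ 0 }) :
    normc v₀ (Quotient.mk (projectivizationSetoid ℂ (Ee n)) w) = ‖(⟪v₀, w.1⟫ : ℂ)‖ / ‖w.1‖ := rfl

lemma sectCP_mk (v₀ : Ee n) (w : { v : Ee n // v ≠ 0 }) :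
    sectCP v₀ (Quotient.mk (projectivizationSetoid ℂ (Ee n)) w) = S v₀ w.1 := rfl

lemma normc_mk_ne_zero_iff (v₀ : Ee n) (w : { v : Ee n // v ≠ 0 }) :
    normc v₀ (Quotient.mk (projectivizationSetoid ℂ (Ee n)) w) ≠ 0 ↔ (⟪v₀, w.1⟫ : ℂ) ≠ 0 := by
  rw [normc_mk]
  have hbn : ‖(w : Ee n)‖ ≠ 0 := norm_ne_zero_iff.mpr w.2
  constructor
  · intro h hc
    exact h (by simp [hc])
  · intro h
    exact div_ne_zero (norm_ne_zero_iff.mpr h) hbn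

lemma continuous_normc (v₀ : Ee n) : Continuous (normc v₀) := by
  apply continuous_quot_lift
  apply Continuous.div
  · exact (Continuous.inner continuous_const continuous_subtype_val).norm
  · exact continuous_subtype_val.norm
  · intro w
    exact norm_ne_zero_iff.mpr w.2


lemma isOpen_U (v₀ : Ee n) : IsOpen {y : CP n | normc v₀ y ≠ 0} :=
  isOpen_ne.preimage (continuous_normc v₀)

lemma continuous_sect_restrict (v₀ : Ee n) :
    Continuous fun y : {y : CP n | normc v₀ y ≠ 0} => sectCP v₀ y.1 := by
  set U : Set (CP n) := {y : CP n | normc v₀ y ≠ 0} with hUdef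
  let q : { v : Ee n // v ≠ 0 } → CP n :=
    fun w => Quotient.mk (projectivizationSetoid ℂ (Ee n)) w
  have hq : Topology.IsQuotientMap q := isQuotientMap_quot_mk
  have h2 := hq.restrictPreimage_isOpen (s := U) (isOpen_U v₀)
  rw [h2.continuous_iff]
  show Continuous fun w : q ⁻¹' U => sc v₀ w.1.1 • (w.1.1 : Ee n)
  have hval : Continuous fun w : q ⁻¹' U => (w.1.1 : Ee n) :=
    continuous_subtype_val.comp continuous_subtype_val
  have hinner : Continuous fun w : q ⁻¹' U => (⟪v₀, w.1.1⟫ : ℂ) :=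
    Continuous.inner continuous_const hval
  have hinner0 : ∀ w : q ⁻¹' U, (⟪v₀, w.1.1⟫ : ℂ) ≠ 0 := by
    intro w
    have hw := w.2
    exact (normc_mk_ne_zero_iff v₀ w.1).mp hw
  have hval0 : ∀ w : q ⁻¹' U, ((‖(w.1.1 : Ee n)‖ : ℝ) : ℂ) ≠ 0 := by
    intro w
    simpa using w.1.2
  refine Continuous.congr (Continuous.smul (f := fun w : q ⁻¹' U => sc v₀ w.1.1) ?_ hval) (fun w => rfl)
  unfold sc
  apply Continuous.mul
  · exact Continuous.div (Complex.continuous_ofReal.comp hinner.norm) hinner hinner0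
  · exact Continuous.inv₀ (Complex.continuous_ofReal.comp hval.norm) hval0

lemma norm_sectCP (v₀ : Ee n) (y : CP n) (hy : normc v₀ y ≠ 0) : ‖sectCP v₀ y‖ = 1 := by
  obtain ⟨w, rfl⟩ := Quotient.exists_rep y
  rw [sectCP_mk]
  exact norm_S v₀ w.1 w.2 ((normc_mk_ne_zero_iff v₀ w).mp hy)

lemma sectCP_ne_zero (v₀ : Ee n) (y : CP n) (hy : normc v₀ y ≠ 0) : sectCP v₀ y ≠ 0 := by
  intro h
  have := norm_sectCP v₀ y hy
  rw [h] at this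
  simp at this

lemma mk_sectCP (v₀ : Ee n) (y : CP n) (hy : normc v₀ y ≠ 0) :
    Projectivization.mk ℂ (sectCP v₀ y) (sectCP_ne_zero v₀ y hy) = y := by
  obtain ⟨w, rfl⟩ := Quotient.exists_rep y
  show Projectivization.mk ℂ (S v₀ w.1) _ = Projectivization.mk ℂ w.1 w.2
  refine (Projectivization.mk_eq_mk_iff' (K := ℂ) (S v₀ w.1) w.1 _ w.2).mpr ?_
  exact ⟨sc v₀ w.1, rfl⟩

lemma inner_sectCP (v₀ : Ee n) (y : CP n) (hy : normc v₀ y ≠ 0) :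
    ∃ r : ℝ, 0 < r ∧ (⟪v₀, sectCP v₀ y⟫ : ℂ) = (r : ℂ) := by
  obtain ⟨w, rfl⟩ := Quotient.exists_rep y
  have hc := (normc_mk_ne_zero_iff v₀ w).mp hy
  rw [sectCP_mk, inner_S v₀ w.1 hc]
  refine ⟨‖(⟪v₀, w.1⟫ : ℂ)‖ * ‖(w : Ee n)‖⁻¹, ?_, rfl⟩
  have h1 : 0 < ‖(⟪v₀, w.1⟫ : ℂ)‖ := norm_pos_iff.mpr hc
  have h2 : 0 < ‖(w : Ee n)‖ := norm_pos_iff.mpr w.2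
  positivity

/-- The point on the circle obtained by normalizing a nonzero complex number. -/
def circOf (z : ℂ) (h : z ≠ 0) : Circle :=
  ⟨z / ‖z‖, by
    have hz : ‖z‖ ≠ 0 := norm_ne_zero_iff.mpr h
    simp only [Submonoid.unitSphere, Submonoid.mem_mk, Subsemigroup.mem_mk,
      mem_sphere_zero_iff_norm]
    rw [norm_div, Complex.norm_real, Real.norm_eq_abs, abs_norm]
    exact div_self hz⟩

lemma circOf_coe (z : ℂ) (h : z ≠ 0) : (circOf z h : ℂ) = z / ‖z‖ := rfl

lemma circOf_mul_pos (u : Circle) (r : ℝ) (hr : 0 < r) (h : ((u : ℂ) * (r : ℂ)) ≠ 0) :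
    circOf ((u : ℂ) * (r : ℂ)) h = u := by
  apply Circle.ext
  rw [circOf_coe]
  have h1 : ‖(u : ℂ) * (r : ℂ)‖ = r := by
    rw [norm_mul]
    have : ‖(u : ℂ)‖ = 1 := mem_sphere_zero_iff_norm.1 u.2
    rw [this]
    simp [abs_of_pos hr]
  rw [h1]
  rw [mul_div_assoc]
  have : ((r : ℂ)) / ((r : ℝ) : ℂ) = 1 := by
    apply div_self
    simpa using hr.ne'
  rw [this, mul_one]

end

end HopfAux

/-- For every `n ≥ 0`, the Hopf map `p : S^{2n+1} → ℂPⁿ` is a locally trivial fiber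
bundle with fiber the circle group `S¹`: it is continuous and every point of `ℂPⁿ`
has an open neighborhood `U` together with a homeomorphism `p⁻¹(U) ≅ U × S¹`
commuting with the projections to `U`. -/
theorem hopfMap_isFiberBundle (n : ℕ) :
    Continuous (hopfMap n) ∧
    ∀ x : CP n, ∃ U : Set (CP n), IsOpen U ∧ x ∈ U ∧
      ∃ e : (hopfMap n ⁻¹' U) ≃ₜ (U × Circle),
        ∀ v : (hopfMap n ⁻¹' U), ((e v).1 : CP n) = hopfMap n (v : oddSphere n) := by
  classical
  have hv1 : ∀ v : oddSphere n, ‖HopfAux.sval v‖ = 1 := by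
    intro v
    exact mem_sphere_zero_iff_norm.mp (Subtype.prop v)
  have hvne : ∀ v : oddSphere n, HopfAux.sval v ≠ 0 := by
    intro v h
    have := hv1 v
    rw [h] at this
    simp at this
  have hcont : Continuous (hopfMap n) := by
    have hg : Continuous fun v : oddSphere n =>
        (⟨HopfAux.sval v, hvne v⟩ : { w : HopfAux.Ee n // w ≠ 0 }) :=
      Continuous.subtype_mk (continuous_subtype_val (p := fun w : HopfAux.Ee n => w ∈ Metric.sphere (0 : HopfAux.Ee n) 1)) _
    exact continuous_quot_mk.comp hg
  refine ⟨hcont, fun x => ?_⟩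
  set v₀ : HopfAux.Ee n := (Projectivization.rep (K := ℂ) x) with hv₀def
  have hv₀ : v₀ ≠ 0 := Projectivization.rep_nonzero x
  set U : Set (CP n) := {y : CP n | HopfAux.normc v₀ y ≠ 0} with hUdef
  have hmem : ∀ v : oddSphere n,
      hopfMap n v ∈ U ↔ (⟪v₀, HopfAux.sval v⟫ : ℂ) ≠ 0 := by
    intro v
    exact HopfAux.normc_mk_ne_zero_iff v₀ ⟨HopfAux.sval v, hvne v⟩
  have hxU : x ∈ U := by
    show HopfAux.normc v₀ x ≠ 0
    have hxx : x = Projectivization.mk ℂ v₀ hv₀ := (Projectivization.mk_rep x).symm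
    rw [hxx]
    exact (HopfAux.normc_mk_ne_zero_iff v₀ ⟨v₀, hv₀⟩).mpr (inner_self_ne_zero.mpr hv₀)
  refine ⟨U, HopfAux.isOpen_U v₀, hxU, ?_⟩
  -- the trivialization
  have hsect1 : ∀ p : U × Circle,
      ‖((p.2 : ℂ)) • HopfAux.sectCP v₀ p.1.1‖ = 1 := by
    intro p
    rw [norm_smul, HopfAux.norm_sectCP v₀ p.1.1 p.1.2, Circle.norm_coe,
      one_mul]
  have hGmk : ∀ p : U × Circle,
      Projectivization.mk ℂ (((p.2 : ℂ)) • HopfAux.sectCP v₀ p.1.1)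
        (fun h => by simpa [h] using hsect1 p) = p.1.1 := by
    intro p
    have h1 : Projectivization.mk ℂ (((p.2 : ℂ)) • HopfAux.sectCP v₀ p.1.1)
        (fun h => by simpa [h] using hsect1 p)
        = Projectivization.mk ℂ (HopfAux.sectCP v₀ p.1.1)
          (HopfAux.sectCP_ne_zero v₀ p.1.1 p.1.2) := by
      rw [Projectivization.mk_eq_mk_iff']
      exact ⟨(p.2 : ℂ), rfl⟩
    rw [h1, HopfAux.mk_sectCP v₀ p.1.1 p.1.2]
  let T : (hopfMap n ⁻¹' U) → U × Circle := fun v =>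
    (⟨hopfMap n v.1, v.2⟩,
      HopfAux.circOf (⟪v₀, HopfAux.sval v.1⟫ : ℂ) ((hmem v.1).mp v.2))
  let G : U × Circle → (hopfMap n ⁻¹' U) := fun p =>
    ⟨⟨((p.2 : ℂ)) • HopfAux.sectCP v₀ p.1.1,
        mem_sphere_zero_iff_norm.mpr (hsect1 p)⟩, by
      show hopfMap n _ ∈ U
      have : hopfMap n (⟨((p.2 : ℂ)) • HopfAux.sectCP v₀ p.1.1,
          mem_sphere_zero_iff_norm.mpr (hsect1 p)⟩ : oddSphere n) = p.1.1 := hGmk p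
      rw [this]
      exact p.1.2⟩
  have hTG : ∀ p : U × Circle, T (G p) = p := by
    intro p
    have h1 : (T (G p)).1 = p.1 := by
      apply Subtype.ext
      show hopfMap n _ = (p.1 : CP n)
      exact hGmk p
    have h2 : (T (G p)).2 = p.2 := by
      apply Circle.ext
      obtain ⟨r, hr, hrr⟩ := HopfAux.inner_sectCP v₀ p.1.1 p.1.2
      have hin : (⟪v₀, ((p.2 : ℂ)) • HopfAux.sectCP v₀ p.1.1⟫ : ℂ)
          = (p.2 : ℂ) * (r : ℂ) := by
        rw [inner_smul_right, hrr]
      have hne : ((p.2 : ℂ) * (r : ℂ)) ≠ 0 :=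
        mul_ne_zero (Circle.coe_ne_zero p.2) (by exact_mod_cast hr.ne')
      have hcoe : ((T (G p)).2 : ℂ)
          = (⟪v₀, ((p.2 : ℂ)) • HopfAux.sectCP v₀ p.1.1⟫ : ℂ)
            / ((‖(⟪v₀, ((p.2 : ℂ)) • HopfAux.sectCP v₀ p.1.1⟫ : ℂ)‖ : ℝ) : ℂ) := rfl
      rw [hcoe, hin]
      have hre : ((p.2 : ℂ) * (r : ℂ)) / ((‖((p.2 : ℂ) * (r : ℂ))‖ : ℝ) : ℂ)
          = ((HopfAux.circOf ((p.2 : ℂ) * (r : ℂ)) hne : Circle) : ℂ) := rfl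
      rw [hre, HopfAux.circOf_mul_pos p.2 r hr hne]
    exact Prod.ext h1 h2
  have hGT : ∀ v : (hopfMap n ⁻¹' U), G (T v) = v := by
    intro v
    apply Subtype.ext
    apply Subtype.ext
    show ((T v).2 : ℂ) • HopfAux.sectCP v₀ (hopfMap n v.1) = HopfAux.sval v.1
    set vv : HopfAux.Ee n := HopfAux.sval v.1 with hvv
    have hcc : (⟪v₀, vv⟫ : ℂ) ≠ 0 := (hmem v.1).mp v.2
    have hncc : ((‖(⟪v₀, vv⟫ : ℂ)‖ : ℝ) : ℂ) ≠ 0 := by simpa using hcc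
    have hsec : HopfAux.sectCP v₀ (hopfMap n v.1) = HopfAux.S v₀ vv := rfl
    have hT2 : ((T v).2 : ℂ) = (⟪v₀, vv⟫ : ℂ) / ((‖(⟪v₀, vv⟫ : ℂ)‖ : ℝ) : ℂ) := rfl
    rw [hsec, hT2]
    show _ • (HopfAux.sc v₀ vv • vv) = vv
    rw [smul_smul]
    have h1 : ((‖vv‖ : ℝ) : ℂ) = 1 := by rw [hv1 v.1]; norm_num
    have h2 : (⟪v₀, vv⟫ : ℂ) / ((‖(⟪v₀, vv⟫ : ℂ)‖ : ℝ) : ℂ) * HopfAux.sc v₀ vv = 1 := by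
      unfold HopfAux.sc
      rw [h1, inv_one, mul_one, div_mul_div_comm, mul_comm]
      exact div_self (mul_ne_zero hncc hcc)
    rw [h2, one_smul]
  have hTcont : Continuous T := by
    refine Continuous.prodMk ?_ ?_
    · exact Continuous.subtype_mk (hcont.comp continuous_subtype_val) _
    · refine Continuous.subtype_mk ?_ _
      show Continuous fun v : (hopfMap n ⁻¹' U) =>
        (⟪v₀, HopfAux.sval v.1⟫ : ℂ) / ((‖(⟪v₀, HopfAux.sval v.1⟫ : ℂ)‖ : ℝ) : ℂ)
      have hval : Continuous fun v : (hopfMap n ⁻¹' U) => HopfAux.sval v.1 :=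
        (continuous_subtype_val (p := fun w : HopfAux.Ee n =>
          w ∈ Metric.sphere (0 : HopfAux.Ee n) 1)).comp continuous_subtype_val
      have hc : Continuous fun v : (hopfMap n ⁻¹' U) => (⟪v₀, HopfAux.sval v.1⟫ : ℂ) :=
        Continuous.inner continuous_const hval
      refine Continuous.div hc (Complex.continuous_ofReal.comp hc.norm) ?_
      intro v
      simpa using (hmem v.1).mp v.2
  have hGcont : Continuous G := by
    refine Continuous.subtype_mk (Continuous.subtype_mk ?_ _) _
    show Continuous fun p : U × Circle => ((p.2 : ℂ)) • HopfAux.sectCP v₀ p.1.1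
    exact Continuous.congr (Continuous.smul (continuous_subtype_val.comp continuous_snd)
      ((HopfAux.continuous_sect_restrict v₀).comp continuous_fst)) (fun p => rfl)
  refine ⟨⟨⟨T, G, hGT, hTG⟩, hTcont, hGcont⟩, fun v => rfl⟩
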